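/- Let q be a prime power, r ≥ 1 an integer, n a positive integer with (r+1) dividing n, and let M ≥ 2 and d ≥ 1 be integers. Suppose there exists a real number x with 0 < x ≤ 1 such that e · (2M − 1) · x^(−d) · q^(−n) · ((1 + x·(q−1))^(r+1) + (q−1)·(1 − x)^(r+1))^(n/(r+1)) < 1, where e is Euler's number. Then there exists a code C ⊆ F_q^n with exactly M codewords such that any two distinct codewords are at Hamming distance at least d, and C is r-locally recoverable: it can be taken inside the set of words partitioned into n/(r+1) blocks of length r+1 in which the last symbol of each block is the sum of the other r symbols of that block. -/

import Mathlib

open Finset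

section Aux
variable {F : Type} [Field F] [Fintype F] [DecidableEq F] (x : ℝ)

/-- per-symbol weight factor -/
noncomputable def sphi (x : ℝ) (c : F) : ℝ := if c = 0 then 1 else x

lemma sphi_nonneg (hx : 0 ≤ x) (c : F) : 0 ≤ sphi x c := by
  unfold sphi; split <;> simp [hx]

/-- weight enumerator of words of length m summing to s -/
noncomputable def Tw (x : ℝ) (m : ℕ) (s : F) : ℝ :=
  ∑ v : Fin m → F, if (∑ j, v j) = s then ∏ j, sphi x (v j) else 0

lemma Tw_succ (m : ℕ) (s : F) :
    Tw x (m+1) s = ∑ c : F, sphi x c * Tw x m (s - c) := by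
  unfold Tw
  rw [← Equiv.sum_comp (Fin.consEquiv fun _ : Fin (m+1) => F)]
  rw [Fintype.sum_prod_type]
  refine Finset.sum_congr rfl fun c _ => ?_
  rw [Finset.mul_sum]
  refine Finset.sum_congr rfl fun v _ => ?_
  simp only [Fin.consEquiv_apply, Fin.sum_univ_succ, Fin.prod_univ_succ, Fin.cons_zero,
    Fin.cons_succ]
  have h : (c + ∑ j, v j = s) ↔ (∑ j, v j = s - c) := by
    rw [eq_sub_iff_add_eq, add_comm]
  rw [if_congr h rfl rfl, mul_ite, mul_zero]

lemma Tw_eq (m : ℕ) (s : F) :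
    Tw x m s = if s = 0
      then ((1 + ((Fintype.card F : ℝ) - 1) * x) ^ m
            + ((Fintype.card F : ℝ) - 1) * (1 - x) ^ m) / (Fintype.card F : ℝ)
      else ((1 + ((Fintype.card F : ℝ) - 1) * x) ^ m - (1 - x) ^ m) / (Fintype.card F : ℝ) := by
  have hq0 : (Fintype.card F : ℝ) ≠ 0 := by
    exact_mod_cast Fintype.card_ne_zero
  induction m generalizing s with
  | zero =>
    unfold Tw
    rw [Fintype.sum_unique]
    simp only [Finset.univ_eq_empty, Finset.sum_empty, Finset.prod_empty, pow_zero]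
    by_cases hs : s = 0
    · rw [if_pos (by simp [hs]), if_pos hs]; field_simp; ring
    · rw [if_neg (by simp [Ne.symm hs]), if_neg hs]; simp
  | succ m ih =>
    rw [Tw_succ]
    set q : ℝ := (Fintype.card F : ℝ) with hqdef
    set A : ℝ := (1 + (q - 1) * x) ^ m with hA
    set B : ℝ := (1 - x) ^ m with hB
    set X0 : ℝ := (A + (q - 1) * B) / q with hX0
    set X1 : ℝ := (A - B) / q with hX1
    have key : ∀ c : F, sphi x c * Tw x m (s - c)
        = x * X1
          + (if c = 0 then (if s = 0 then X0 else X1) - x * X1 else 0)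
          + (if c = s then (if s = 0 then 0 else x * X0 - x * X1) else 0) := by
      intro c
      rw [ih]
      by_cases hc : c = 0
      · subst hc
        rw [if_pos rfl]
        unfold sphi
        rw [if_pos rfl, one_mul, sub_zero]
        by_cases hs : s = 0
        · simp only [if_pos hs, if_pos hs.symm]; ring
        · have h0s : ¬ (0:F) = s := fun h => hs h.symm
          simp only [if_neg hs, if_neg h0s]; ring
      · unfold sphi
        rw [if_neg hc]
        by_cases hcs : c = s
        · have hs : ¬ s = 0 := fun h => hc (hcs.trans h)
          have h0 : s - c = 0 := by rw [hcs, sub_self]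
          rw [if_pos h0, if_neg hc, if_pos hcs, if_neg hs]
          ring
        · by_cases hsc0 : s - c = 0
          · exact absurd (by rw [← sub_eq_zero]; rw [eq_comm] at hsc0 ⊢; linear_combination -hsc0) hcs
          · rw [if_neg hsc0, if_neg hc, if_neg hcs]; ring
    rw [Finset.sum_congr rfl fun c _ => key c]
    rw [Finset.sum_add_distrib, Finset.sum_add_distrib, Finset.sum_const, Finset.card_univ,
      Finset.sum_ite_eq' (univ : Finset F) (0:F), Finset.sum_ite_eq' (univ : Finset F) s]
    simp only [Finset.mem_univ, if_true, nsmul_eq_mul, ← hqdef]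
    by_cases hs : s = 0
    · rw [if_pos hs, if_pos hs, hX0, hX1, hA, hB]
      field_simp
      rw [if_pos hs]
      field_simp
      ring
    · rw [if_neg hs, if_neg hs, hX0, hX1, hA, hB]
      field_simp
      rw [if_neg hs]

      field_simp
      ring

lemma sum_sphi : ∑ c : F, sphi x c = 1 + ((Fintype.card F : ℝ) - 1) * x := by
  have h : ∀ c : F, sphi x c = x + (if c = 0 then 1 - x else 0) := by
    intro c; unfold sphi; split <;> ring
  rw [Finset.sum_congr rfl fun c _ => h c, Finset.sum_add_distrib,
    Finset.sum_ite_eq' (univ : Finset F) (0:F) (fun _ => (1:ℝ) - x), Finset.sum_const,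
    Finset.card_univ]
  simp only [Finset.mem_univ, if_true, nsmul_eq_mul]
  ring

lemma sum_prod_sphi (m : ℕ) :
    ∑ v : Fin m → F, ∏ j, sphi x (v j)
      = (1 + ((Fintype.card F : ℝ) - 1) * x) ^ m := by
  rw [← Fintype.piFinset_univ, ← Finset.prod_univ_sum]
  rw [Finset.prod_congr rfl fun j _ => sum_sphi x, Finset.prod_const, Finset.card_univ,
    Fintype.card_fin]

/-- the block weight enumerator: word = (v, sum v) -/
noncomputable def Gblk (x : ℝ) (F : Type) [Field F] [Fintype F] [DecidableEq F] (r : ℕ) : ℝ :=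
  ∑ v : Fin r → F, (∏ j, sphi x (v j)) * sphi x (∑ j, v j)

lemma Gblk_nonneg (hx : 0 ≤ x) (r : ℕ) : 0 ≤ Gblk x F r := by
  refine Finset.sum_nonneg fun v _ => mul_nonneg (Finset.prod_nonneg fun j _ => sphi_nonneg x hx _) (sphi_nonneg x hx _)

lemma Gblk_eq (r : ℕ) :
    Gblk x F r = ((1 + ((Fintype.card F : ℝ) - 1) * x) ^ (r+1)
      + ((Fintype.card F : ℝ) - 1) * (1 - x) ^ (r+1)) / (Fintype.card F : ℝ) := by
  have hq0 : (Fintype.card F : ℝ) ≠ 0 := by exact_mod_cast Fintype.card_ne_zero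
  have h : ∀ v : Fin r → F, (∏ j, sphi x (v j)) * sphi x (∑ j, v j)
      = x * (∏ j, sphi x (v j))
        + (1 - x) * (if (∑ j, v j) = 0 then ∏ j, sphi x (v j) else 0) := by
    intro v
    unfold sphi
    by_cases hv : (∑ j, v j) = 0
    · simp only [if_pos hv]; ring
    · simp only [if_neg hv]; ring
  unfold Gblk
  rw [Finset.sum_congr rfl fun v _ => h v, Finset.sum_add_distrib, ← Finset.mul_sum,
    ← Finset.mul_sum, sum_prod_sphi]
  have : (∑ v : Fin r → F, if (∑ j, v j) = 0 then ∏ j, sphi x (v j) else 0) = Tw x r (0:F) := rfl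
  rw [this, Tw_eq x r (0:F), if_pos rfl]
  field_simp
  ring

section Ens
variable {F : Type} [Field F] [Fintype F] [DecidableEq F] (x : ℝ) (b r : ℕ)



/-- extend free block data by parity symbols -/
def extw (a : Fin b → Fin r → F) : Fin b × Fin (r+1) → F :=
  fun p => Fin.lastCases (∑ k, a p.1 k) (fun j => a p.1 j) p.2

lemma extw_last (a : Fin b → Fin r → F) (i : Fin b) :
    extw b r a (i, Fin.last r) = ∑ k, a i k := by
  simp [extw]

lemma extw_cast (a : Fin b → Fin r → F) (i : Fin b) (j : Fin r) :
    extw b r a (i, j.castSucc) = a i j := by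
  simp [extw]

lemma extw_inj : Function.Injective (extw (F := F) b r) := by
  intro a a' h
  funext i j
  have := congrFun h (i, j.castSucc)
  rwa [extw_cast, extw_cast] at this

noncomputable def EnsF (F : Type) [Field F] [Fintype F] [DecidableEq F] (b r : ℕ) :
    Finset (Fin b × Fin (r+1) → F) :=
  Finset.image (extw b r) Finset.univ

lemma mem_EnsF {z : Fin b × Fin (r+1) → F} :
    z ∈ EnsF F b r ↔ ∀ i, z (i, Fin.last r) = ∑ j : Fin r, z (i, j.castSucc) := by
  constructor
  · rintro hz i
    obtain ⟨a, -, rfl⟩ := Finset.mem_image.1 hz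
    rw [extw_last]
    exact Finset.sum_congr rfl fun j _ => (extw_cast b r a i j).symm
  · intro hz
    refine Finset.mem_image.2 ⟨fun i j => z (i, j.castSucc), Finset.mem_univ _, ?_⟩
    funext p
    obtain ⟨i, j⟩ := p
    refine Fin.lastCases ?_ (fun j => ?_) j
    · rw [extw_last, (hz i)]
    · rw [extw_cast]

lemma card_EnsF : (EnsF F b r).card = (Fintype.card F ^ r) ^ b := by
  rw [EnsF, Finset.card_image_of_injective _ (extw_inj b r), Finset.card_univ]
  simp [Fintype.card_fun]

end Ens

section Main
variable {F : Type} [Field F] [Fintype F] [DecidableEq F] (x : ℝ) (b r : ℕ)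

lemma sum_Wt (y : Fin b × Fin (r+1) → F) (hy : y ∈ EnsF F b r) :
    ∑ z ∈ EnsF F b r, ∏ p, sphi x (z p - y p) = (Gblk x F r) ^ b := by
  rw [EnsF, Finset.sum_image (fun a _ a' _ h => extw_inj b r h)]
  set c : Fin b → Fin r → F := fun i j => y (i, j.castSucc) with hc
  have hy' : ∀ i, y (i, Fin.last r) = ∑ k, c i k := (mem_EnsF b r).1 hy
  set g : (Fin r → F) → ℝ := fun v => (∏ j, sphi x (v j)) * sphi x (∑ j, v j) with hg
  have hterm : ∀ a : Fin b → Fin r → F,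
      (∏ p, sphi x (extw b r a p - y p)) = ∏ i, g (a i - c i) := by
    intro a
    rw [Fintype.prod_prod_type]
    refine Finset.prod_congr rfl fun i _ => ?_
    rw [Fin.prod_univ_castSucc, hg]
    have h1 : ∀ j : Fin r, sphi x (extw b r a (i, j.castSucc) - y (i, j.castSucc))
        = sphi x ((a i - c i) j) := by
      intro j; rw [extw_cast]; rfl
    rw [Finset.prod_congr rfl fun j _ => h1 j]
    congr 1
    rw [extw_last, hy' i, ← Finset.sum_sub_distrib]
    simp [Pi.sub_apply]
  rw [Finset.sum_congr rfl fun a _ => hterm a]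
  have hE := Equiv.sum_comp (Equiv.piCongrRight fun i : Fin b => Equiv.subRight (c i))
    (fun a : Fin b → Fin r → F => ∏ i, g (a i))
  simp only [Equiv.piCongrRight_apply, Pi.map_apply, Equiv.subRight_apply] at hE
  rw [hE]
  have hfact := (Finset.prod_univ_sum (fun _ : Fin b => (univ : Finset (Fin r → F)))
    (fun _ v => g v))
  rw [Fintype.piFinset_univ] at hfact
  rw [← hfact, Finset.prod_const, Finset.card_univ, Fintype.card_fin]
  rfl

lemma prod_sphi_sub_eq (z y : Fin b × Fin (r+1) → F) :
    ∏ p, sphi x (z p - y p) = x ^ hammingDist z y := by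
  have h : ∀ p, sphi x (z p - y p) = if z p = y p then 1 else x := by
    intro p; simp [sphi, sub_eq_zero]
  rw [Finset.prod_congr rfl fun p _ => h p, Finset.prod_ite, Finset.prod_const_one, one_mul,
    Finset.prod_const]
  congr 1

lemma ball_card_le (hx0 : 0 < x) (hx1 : x ≤ 1) (d : ℕ)
    (y : Fin b × Fin (r+1) → F) (hy : y ∈ EnsF F b r) :
    (((EnsF F b r).filter (fun z => hammingDist z y < d)).card : ℝ)
      ≤ (x ^ d)⁻¹ * (Gblk x F r) ^ b := by
  have key : (((EnsF F b r).filter (fun z => hammingDist z y < d)).card : ℝ) * x ^ d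
      ≤ (Gblk x F r) ^ b := by
    calc (((EnsF F b r).filter (fun z => hammingDist z y < d)).card : ℝ) * x ^ d
        = ∑ z ∈ (EnsF F b r).filter (fun z => hammingDist z y < d), x ^ d := by
          rw [Finset.sum_const, nsmul_eq_mul]
      _ ≤ ∑ z ∈ (EnsF F b r).filter (fun z => hammingDist z y < d), x ^ hammingDist z y := by
          refine Finset.sum_le_sum fun z hz => ?_
          exact pow_le_pow_of_le_one hx0.le hx1 (Nat.le_of_lt (Finset.mem_filter.1 hz).2)
      _ ≤ ∑ z ∈ EnsF F b r, x ^ hammingDist z y := by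
          refine Finset.sum_le_sum_of_subset_of_nonneg (Finset.filter_subset _ _)
            fun z _ _ => pow_nonneg hx0.le _
      _ = ∑ z ∈ EnsF F b r, ∏ p, sphi x (z p - y p) :=
          Finset.sum_congr rfl fun z _ => (prod_sphi_sub_eq x b r z y).symm
      _ = (Gblk x F r) ^ b := sum_Wt x b r y hy
  have hxdpos : (0:ℝ) < x ^ d := pow_pos hx0 d
  rw [inv_mul_eq_div, le_div_iff₀ hxdpos]
  exact key

lemma greedy (hx0 : 0 < x) (hx1 : x ≤ 1) (d : ℕ) (hd : 1 ≤ d) (M : ℕ)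
    (hKey : ((M:ℝ) - 1) * ((x ^ d)⁻¹ * (Gblk x F r) ^ b)
        < ((Fintype.card F : ℝ) ^ r) ^ b) :
    ∃ C : Finset (Fin b × Fin (r+1) → F), C ⊆ EnsF F b r ∧ C.card = M ∧
      ∀ X ∈ C, ∀ Y ∈ C, X ≠ Y → d ≤ hammingDist X Y := by
  have hs0 : (0:ℝ) ≤ (x ^ d)⁻¹ * (Gblk x F r) ^ b :=
    mul_nonneg (inv_nonneg.2 (pow_nonneg hx0.le _)) (pow_nonneg (Gblk_nonneg x hx0.le r) _)
  induction M with
  | zero => exact ⟨∅, by simp⟩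
  | succ M ih =>
    obtain ⟨C, hCsub, hCcard, hCdist⟩ := ih (by
      refine lt_of_le_of_lt (mul_le_mul_of_nonneg_right ?_ hs0) hKey
      push_cast; linarith)
    set Bad := (EnsF F b r).filter (fun z => ∃ y ∈ C, hammingDist z y < d) with hBadDef
    have hBadsub : Bad ⊆ C.biUnion (fun y => (EnsF F b r).filter (fun z => hammingDist z y < d)) := by
      intro z hz
      obtain ⟨hzE, y, hyC, hyd⟩ := Finset.mem_filter.1 hz
      exact Finset.mem_biUnion.2 ⟨y, hyC, Finset.mem_filter.2 ⟨hzE, hyd⟩⟩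
    have hBadcard : (Bad.card : ℝ) < ((Fintype.card F : ℝ) ^ r) ^ b := by
      have h1 : (Bad.card : ℝ) ≤ ∑ y ∈ C, (((EnsF F b r).filter
          (fun z => hammingDist z y < d)).card : ℝ) := by
        have := le_trans (Finset.card_le_card hBadsub) (Finset.card_biUnion_le)
        exact_mod_cast this
      have h2 : ∑ y ∈ C, (((EnsF F b r).filter (fun z => hammingDist z y < d)).card : ℝ)
          ≤ (M : ℝ) * ((x ^ d)⁻¹ * (Gblk x F r) ^ b) := by
        calc ∑ y ∈ C, (((EnsF F b r).filter (fun z => hammingDist z y < d)).card : ℝ)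
            ≤ ∑ y ∈ C, (x ^ d)⁻¹ * (Gblk x F r) ^ b :=
              Finset.sum_le_sum fun y hy => ball_card_le x b r hx0 hx1 d y (hCsub hy)
          _ = (M : ℝ) * ((x ^ d)⁻¹ * (Gblk x F r) ^ b) := by
              rw [Finset.sum_const, hCcard, nsmul_eq_mul]
      refine lt_of_le_of_lt (h1.trans h2) (lt_of_le_of_lt (le_of_eq ?_) hKey)
      push_cast; ring
    have hBadlt : Bad.card < (EnsF F b r).card := by
      have : ((EnsF F b r).card : ℝ) = ((Fintype.card F : ℝ) ^ r) ^ b := by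
        rw [card_EnsF]; push_cast; ring
      rw [← this] at hBadcard
      exact_mod_cast hBadcard
    have hnsub : ¬ (EnsF F b r) ⊆ Bad := fun h =>
      absurd (Finset.card_le_card h) (not_le.2 hBadlt)
    obtain ⟨z, hzE, hzB⟩ := Finset.not_subset.1 hnsub
    have hzC : z ∉ C := by
      intro hzC
      exact hzB (Finset.mem_filter.2 ⟨hzE, z, hzC, by simp [hammingDist_self]; omega⟩)
    have hzfar : ∀ y ∈ C, d ≤ hammingDist z y := by
      intro y hy
      by_contra hlt
      exact hzB (Finset.mem_filter.2 ⟨hzE, y, hy, by omega⟩)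
    refine ⟨insert z C, ?_, ?_, ?_⟩
    · exact Finset.insert_subset hzE hCsub
    · rw [Finset.card_insert_of_notMem hzC, hCcard]
    · intro X hX Y hY hXY
      rcases Finset.mem_insert.1 hX with rfl | hX' <;> rcases Finset.mem_insert.1 hY with rfl | hY'
      · exact absurd rfl hXY
      · exact hzfar Y hY'
      · rw [hammingDist_comm]; exact hzfar X hX'
      · exact hCdist X hX' Y hY' hXY
end Main

/-- (Random-coding theorem via the Lovász Local Lemma.)
Suppose `(r+1) ∣ n` and for some `0 < x ≤ 1`,
`e (2M - 1) x^{-d} q^{-n} ((1 + x(q-1))^{r+1} + (q-1)(1-x)^{r+1})^{n/(r+1)} < 1`.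
Then there is a code with exactly `M` codewords, minimum distance at least `d`,
locality `r`, lying in the parity-block ensemble: words are made of `n/(r+1)` blocks
of length `r+1`, the last symbol of each block being the sum of the other `r`. -/
theorem stmt_12 (q r n M d : ℕ) (hr : 1 ≤ r) (hn : 1 ≤ n) (hrn : (r + 1) ∣ n)
    (hM : 2 ≤ M) (hd : 1 ≤ d)
    (F : Type) [Field F] [Fintype F] [DecidableEq F] (hq : Fintype.card F = q)
    (x : ℝ) (hx0 : 0 < x) (hx1 : x ≤ 1)
    (hlt : Real.exp 1 * (2 * (M : ℝ) - 1) * x ^ (-(d : ℤ)) * (q : ℝ) ^ (-(n : ℤ)) *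
        ((1 + x * ((q : ℝ) - 1)) ^ (r + 1)
          + ((q : ℝ) - 1) * (1 - x) ^ (r + 1)) ^ (n / (r + 1))
      < 1) :
    ∃ C : Finset (Fin (n / (r + 1)) × Fin (r + 1) → F), C.card = M ∧
      (∀ X ∈ C, ∀ Y ∈ C, X ≠ Y → d ≤ hammingDist X Y) ∧
      (∀ X ∈ C, ∀ i : Fin (n / (r + 1)),
        X (i, Fin.last r) = ∑ j : Fin r, X (i, j.castSucc)) ∧
      (∀ i : Fin (n / (r + 1)) × Fin (r + 1),
        ∃ R : Finset (Fin (n / (r + 1)) × Fin (r + 1)), i ∉ R ∧ R.card = r ∧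
          ∀ X ∈ C, ∀ Y ∈ C, X i ≠ Y i → ∃ l ∈ R, X l ≠ Y l) := by
  set b := n / (r + 1) with hbdef
  have hn' : n = (r + 1) * b := (Nat.mul_div_cancel' hrn).symm
  set Q : ℝ := (q : ℝ) with hQdef
  have hQ1 : (1:ℝ) ≤ Q := by
    rw [hQdef, ← hq]
    exact_mod_cast Fintype.card_pos
  have hQpos : (0:ℝ) < Q := lt_of_lt_of_le one_pos hQ1
  set H : ℝ := (1 + x * (Q - 1)) ^ (r + 1) + (Q - 1) * (1 - x) ^ (r + 1) with hHdef
  have hGblk : Gblk x F r = H / Q := by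
    rw [Gblk_eq, hq, hHdef, hQdef]
    ring_nf
  have hHnonneg : (0:ℝ) ≤ H := by
    have h1 : (0:ℝ) ≤ 1 + x * (Q - 1) := by nlinarith
    have h2 : (0:ℝ) ≤ 1 - x := by linarith
    have h3 : (0:ℝ) ≤ Q - 1 := by linarith
    positivity
  -- rewrite hlt
  rw [zpow_neg, zpow_neg, zpow_natCast, zpow_natCast] at hlt
  have hQnpos : (0:ℝ) < Q ^ n := pow_pos hQpos n
  have hxdpos : (0:ℝ) < x ^ d := pow_pos hx0 d
  have hsnn : (0:ℝ) ≤ (x ^ d)⁻¹ * H ^ b :=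
    mul_nonneg (inv_nonneg.2 hxdpos.le) (pow_nonneg hHnonneg b)
  have hM1 : ((M:ℝ) - 1) ≤ Real.exp 1 * (2 * (M:ℝ) - 1) := by
    have he : (2:ℝ) ≤ Real.exp 1 := by
      have := Real.add_one_le_exp (1:ℝ)
      linarith
    have hM' : (2:ℝ) ≤ (M:ℝ) := by exact_mod_cast hM
    nlinarith
  have step2 : Real.exp 1 * (2 * (M:ℝ) - 1) * ((x ^ d)⁻¹ * H ^ b) < Q ^ n := by
    have h' := mul_lt_mul_of_pos_right hlt hQnpos
    rw [one_mul] at h'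
    have heq : Real.exp 1 * (2 * (M:ℝ) - 1) * (x ^ d)⁻¹ * (Q ^ n)⁻¹ * H ^ b * Q ^ n
        = Real.exp 1 * (2 * (M:ℝ) - 1) * ((x ^ d)⁻¹ * H ^ b) := by
      field_simp
    rwa [heq] at h'
  have step1 : ((M:ℝ) - 1) * ((x ^ d)⁻¹ * H ^ b) < Q ^ n :=
    lt_of_le_of_lt (mul_le_mul_of_nonneg_right hM1 hsnn) step2
  have hQbpos : (0:ℝ) < Q ^ b := pow_pos hQpos b
  have hpowsplit : Q ^ n = (Q ^ r) ^ b * Q ^ b := by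
    rw [hn', pow_mul, ← mul_pow, pow_succ]
  have hKey : ((M:ℝ) - 1) * ((x ^ d)⁻¹ * (Gblk x F r) ^ b)
      < ((Fintype.card F : ℝ) ^ r) ^ b := by
    rw [hpowsplit] at step1
    have h' := mul_lt_mul_of_pos_right step1 (inv_pos.2 hQbpos)
    rw [mul_inv_cancel_right₀ (ne_of_gt hQbpos)] at h'
    have hfq : ((Fintype.card F : ℝ)) = Q := by rw [hQdef, hq]
    rw [hfq, hGblk]
    have heq2 : ((M:ℝ) - 1) * ((x ^ d)⁻¹ * (H / Q) ^ b)
        = ((M:ℝ) - 1) * ((x ^ d)⁻¹ * H ^ b) * (Q ^ b)⁻¹ := by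
      rw [div_pow, div_eq_mul_inv]
      ring
    rw [heq2]
    exact h'
  obtain ⟨C, hCsub, hCcard, hCdist⟩ := greedy x b r hx0 hx1 d hd M hKey
  refine ⟨C, hCcard, hCdist, ?_, ?_⟩
  · intro X hX i
    exact (mem_EnsF b r).1 (hCsub hX) i
  · rintro ⟨i1, i2⟩
    refine ⟨({i1} : Finset (Fin b)) ×ˢ ((univ : Finset (Fin (r+1))).erase i2), ?_, ?_, ?_⟩
    · intro hmem
      exact absurd ((Finset.mem_product.1 hmem).2) (by simp)
    · rw [Finset.card_product, Finset.card_singleton, Finset.card_erase_of_mem (Finset.mem_univ _),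
        Finset.card_univ, Fintype.card_fin, one_mul, Nat.add_sub_cancel]
    · intro X hX Y hY hne
      by_contra hcon
      push_neg at hcon
      have hagree : ∀ j : Fin (r+1), j ≠ i2 → X (i1, j) = Y (i1, j) := by
        intro j hj
        by_contra hne2
        exact hne2 (hcon (i1, j) (Finset.mem_product.2 ⟨Finset.mem_singleton_self _,
          Finset.mem_erase.2 ⟨hj, Finset.mem_univ _⟩⟩))
      have hXp := (mem_EnsF b r).1 (hCsub hX) i1
      have hYp := (mem_EnsF b r).1 (hCsub hY) i1
      by_cases hlast : i2 = Fin.last r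
      · subst hlast
        apply hne
        rw [hXp, hYp]
        exact Finset.sum_congr rfl fun j _ =>
          hagree j.castSucc (Fin.castSucc_lt_last j).ne
      · obtain ⟨k, hk⟩ := Fin.exists_castSucc_eq.2 hlast
        have hsum : ∑ j : Fin r, X (i1, j.castSucc) = ∑ j : Fin r, Y (i1, j.castSucc) := by
          rw [← hXp, ← hYp]
          exact hagree (Fin.last r) (fun h => hlast h.symm)
        rw [← Finset.add_sum_erase _ _ (Finset.mem_univ k),
          ← Finset.add_sum_erase _ _ (Finset.mem_univ k)] at hsum
        have hrest : ∑ j ∈ (univ : Finset (Fin r)).erase k, X (i1, j.castSucc)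
            = ∑ j ∈ (univ : Finset (Fin r)).erase k, Y (i1, j.castSucc) := by
          refine Finset.sum_congr rfl fun j hj => ?_
          refine hagree j.castSucc fun h => ?_
          rw [← hk] at h
          exact (Finset.mem_erase.1 hj).1 (Fin.castSucc_injective r h)
        rw [hrest] at hsum
        have := add_right_cancel hsum
        rw [hk] at this
        exact hne this
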